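/- For 0 < p ≤ 1, the supremum over all nonnegative nonincreasing functions f on (0,∞) of (∫₀^∞ f(t) dt)^p / (∫₀^∞ f(t)^p t^{p-1} dt) equals p. -/

import Mathlib

open MeasureTheory Set intervalIntegral
open scoped ENNReal

-- real key lemma: decreasing differences of x^p
lemma Lreal (p : ℝ) (hp0 : 0 < p) (hp1 : p ≤ 1) {u s h : ℝ} (hu : 0 ≤ u) (hus : u ≤ s)
    (hh : 0 ≤ h) : (s + h) ^ p + u ^ p ≤ s ^ p + (u + h) ^ p := by
  have hs : 0 ≤ s := hu.trans hus
  have hr : (-1:ℝ) < p - 1 := by linarith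
  have key : ∫ t in s..(s+h), t ^ (p-1) ≤ ∫ t in u..(u+h), t ^ (p-1) := by
    have hcomp : (∫ t in u..(u+h), (t + (s - u)) ^ (p-1)) = ∫ t in s..(s+h), t ^ (p-1) := by
      rw [integral_comp_add_right (fun t => t ^ (p-1)) (s - u)]
      have e1 : u + (s - u) = s := by ring
      have e2 : u + h + (s - u) = s + h := by ring
      rw [e1, e2]
    rw [← hcomp]
    have hae : ∀ᵐ t ∂(volume.restrict (Icc u (u+h))),
        (t + (s - u)) ^ (p-1) ≤ t ^ (p-1) := by
      have hne : ∀ᵐ t ∂(volume.restrict (Icc u (u+h))), t ≠ (0:ℝ) := by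
        apply ae_restrict_of_ae
        refine ae_iff.2 ?_
        simp only [ne_eq, not_not]
        simpa using Real.volume_singleton (a := 0)
      filter_upwards [hne, ae_restrict_mem measurableSet_Icc] with t ht hmem
      have ht0 : 0 < t := lt_of_le_of_ne (hu.trans hmem.1) (Ne.symm ht)
      exact Real.rpow_le_rpow_of_nonpos ht0 (by linarith [hmem.1]) (by linarith)
    exact integral_mono_ae_restrict (by linarith)
      (by simpa [add_comm] using (intervalIntegrable_rpow' hr (a := s) (b := s + h)).comp_add_right (s-u))
      (intervalIntegrable_rpow' hr) hae
  have e1 : ∫ t in s..(s+h), t ^ (p-1) = ((s+h)^p - s^p) / p := by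
    rw [integral_rpow (Or.inl hr)]; ring_nf
  have e2 : ∫ t in u..(u+h), t ^ (p-1) = ((u+h)^p - u^p) / p := by
    rw [integral_rpow (Or.inl hr)]; ring_nf
  rw [e1, e2, div_le_div_iff_of_pos_right hp0] at key
  linarith

-- concavity: (a+d)^p - a^p ≤ p * a^(p-1) * d
lemma Creal (p : ℝ) (hp0 : 0 < p) (hp1 : p ≤ 1) {a d : ℝ} (ha : 0 < a) (hd : 0 ≤ d) :
    (a + d) ^ p ≤ a ^ p + p * (a ^ (p-1) * d) := by
  have hr : (-1:ℝ) < p - 1 := by linarith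
  have key : ∫ t in a..(a+d), t ^ (p-1) ≤ ∫ t in a..(a+d), a ^ (p-1) := by
    apply integral_mono_on (by linarith) (intervalIntegrable_rpow' hr)
      intervalIntegrable_const
    intro x hx
    exact Real.rpow_le_rpow_of_nonpos ha hx.1 (by linarith)
  rw [integral_rpow (Or.inl hr), intervalIntegral.integral_const] at key
  have : ((a+d)^(p-1+1) - a^(p-1+1)) / (p-1+1) ≤ d * a^(p-1) := by
    simpa [smul_eq_mul, add_sub_cancel_left] using key
  have hpe : p - 1 + 1 = p := by ring
  rw [hpe, div_le_iff₀ hp0] at this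
  nlinarith [this]

section aux
variable {p : ℝ}

-- ENNReal key lemma
lemma Lenn (hp0 : 0 < p) (hp1 : p ≤ 1) {u s h : ℝ≥0∞} (hus : u ≤ s) :
    (s + h) ^ p + u ^ p ≤ s ^ p + (u + h) ^ p := by
  rcases eq_or_ne s ∞ with rfl | hs
  · rw [ENNReal.top_rpow_of_pos hp0]; simp
  rcases eq_or_ne h ∞ with rfl | hh
  · rw [add_top, ENNReal.top_rpow_of_pos hp0]; simp [hp0]
  have hu : u ≠ ∞ := fun h' => hs (top_le_iff.mp (h' ▸ hus))
  rw [← ENNReal.ofReal_toReal hs, ← ENNReal.ofReal_toReal hh, ← ENNReal.ofReal_toReal hu,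
    ← ENNReal.ofReal_add s.toReal_nonneg h.toReal_nonneg,
    ← ENNReal.ofReal_add u.toReal_nonneg h.toReal_nonneg,
    ENNReal.ofReal_rpow_of_nonneg (x := s.toReal + h.toReal) (by positivity) hp0.le,
    ENNReal.ofReal_rpow_of_nonneg (x := u.toReal + h.toReal) (by positivity) hp0.le,
    ENNReal.ofReal_rpow_of_nonneg (x := u.toReal) u.toReal_nonneg hp0.le,
    ENNReal.ofReal_rpow_of_nonneg (x := s.toReal) s.toReal_nonneg hp0.le,
    ← ENNReal.ofReal_add (by positivity) (by positivity),
    ← ENNReal.ofReal_add (by positivity) (by positivity)]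
  apply ENNReal.ofReal_le_ofReal
  exact Lreal p hp0 hp1 u.toReal_nonneg
    ((ENNReal.toReal_le_toReal hu hs).2 hus) h.toReal_nonneg

end aux

section main
variable {p : ℝ}

-- The core induction: Riemann-sum bound for bounded antitone f
lemma Bstep (hp0 : 0 < p) (hp1 : p ≤ 1) (f : ℝ → ℝ≥0∞) (hf : Measurable f)
    (hanti : AntitoneOn f (Ioi 0)) (M : ℝ≥0∞) (hM : M ≠ ∞) (hfM : ∀ t, 0 < t → f t ≤ M)
    (Δ : ℝ) (hΔ : 0 < Δ) : ∀ k : ℕ,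
    (∫⁻ t in Ioc 0 (((k : ℝ) + 1) * Δ), f t) ^ p ≤
      M ^ p * ENNReal.ofReal (Δ ^ p) +
        ENNReal.ofReal p * ∫⁻ t in Ioc 0 ((k : ℝ) * Δ), f t ^ p * ENNReal.ofReal (t ^ (p-1)) := by
  intro k
  induction k with
  | zero =>
    simp only [Nat.cast_zero, zero_add, one_mul, zero_mul]
    have h1 : (∫⁻ t in Ioc 0 Δ, f t) ≤ M * ENNReal.ofReal Δ := by
      calc (∫⁻ t in Ioc 0 Δ, f t) ≤ ∫⁻ _ in Ioc 0 Δ, M :=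
            setLIntegral_mono measurable_const (fun x hx => hfM x hx.1)
        _ = M * ENNReal.ofReal Δ := by rw [setLIntegral_const, Real.volume_Ioc]; norm_num
    calc (∫⁻ t in Ioc 0 Δ, f t) ^ p ≤ (M * ENNReal.ofReal Δ) ^ p :=
          ENNReal.rpow_le_rpow h1 hp0.le
      _ = M ^ p * ENNReal.ofReal (Δ ^ p) := by
          rw [ENNReal.mul_rpow_of_nonneg _ _ hp0.le, ENNReal.ofReal_rpow_of_pos hΔ]
      _ ≤ _ := le_self_add
  | succ k ih =>
    have hcast : ((((k : ℕ) + 1 : ℕ) : ℝ) + 1) * Δ = ((k : ℝ) + 1) * Δ + Δ := by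
      push_cast; ring
    have hcast2 : (((k : ℕ) + 1 : ℕ) : ℝ) * Δ = ((k : ℝ) + 1) * Δ := by push_cast; ring
    rw [hcast, hcast2]
    set a₀ : ℝ := (k : ℝ) * Δ with ha₀
    set a₁ : ℝ := ((k : ℝ) + 1) * Δ with ha₁
    set a₂ : ℝ := ((k : ℝ) + 1) * Δ + Δ with ha₂
    have h01 : (0:ℝ) ≤ a₀ := by positivity
    have h1pos : (0:ℝ) < a₁ := by positivity
    have h12 : a₁ ≤ a₂ := by rw [ha₂]; linarith
    have h02 : a₀ ≤ a₁ := by rw [ha₀, ha₁]; nlinarith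
    -- split the integral
    have hsplit : (∫⁻ t in Ioc 0 a₂, f t) =
        (∫⁻ t in Ioc 0 a₁, f t) + ∫⁻ t in Ioc a₁ a₂, f t := by
      rw [← Ioc_union_Ioc_eq_Ioc h1pos.le h12, lintegral_union measurableSet_Ioc]
      exact (Set.Ioc_disjoint_Ioc_of_le le_rfl)
    set F₁ : ℝ≥0∞ := ∫⁻ t in Ioc 0 a₁, f t with hF₁
    set c : ℝ≥0∞ := f a₁ with hc
    have hcM : c ≤ M := hfM a₁ h1pos
    have hcfin : c ≠ ∞ := fun h => hM (top_le_iff.mp (h ▸ hcM))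
    have hpiece : (∫⁻ t in Ioc a₁ a₂, f t) ≤ c * ENNReal.ofReal Δ := by
      calc (∫⁻ t in Ioc a₁ a₂, f t) ≤ ∫⁻ _ in Ioc a₁ a₂, c :=
            setLIntegral_mono measurable_const
              (fun x hx => hanti (mem_Ioi.2 h1pos) (mem_Ioi.2 (h1pos.trans hx.1)) hx.1.le)
        _ = c * ENNReal.ofReal Δ := by
            rw [setLIntegral_const, Real.volume_Ioc, ha₂]
            rw [ha₁]; norm_num
    have hu : c * ENNReal.ofReal a₁ ≤ F₁ := by
      calc c * ENNReal.ofReal a₁ = ∫⁻ _ in Ioc 0 a₁, c := by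
            rw [setLIntegral_const, Real.volume_Ioc]; norm_num
        _ ≤ F₁ := setLIntegral_mono hf
              (fun x hx => hanti (mem_Ioi.2 hx.1) (mem_Ioi.2 h1pos) hx.2)
    -- the chief inequality from Lenn
    have key : (F₁ + c * ENNReal.ofReal Δ) ^ p + (c * ENNReal.ofReal a₁) ^ p ≤
        F₁ ^ p + (c * ENNReal.ofReal a₂) ^ p := by
      have := Lenn hp0 hp1 (h := c * ENNReal.ofReal Δ) hu
      have he : c * ENNReal.ofReal a₁ + c * ENNReal.ofReal Δ = c * ENNReal.ofReal a₂ := by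
        rw [← mul_add, ← ENNReal.ofReal_add h1pos.le hΔ.le, ha₂]
      rwa [he] at this
    -- lower bound for the integral of G on (a₀, a₁]
    have hGlow : c ^ p * ENNReal.ofReal (a₁ ^ (p-1)) * ENNReal.ofReal Δ ≤
        ∫⁻ t in Ioc a₀ a₁, f t ^ p * ENNReal.ofReal (t ^ (p-1)) := by
      calc c ^ p * ENNReal.ofReal (a₁ ^ (p-1)) * ENNReal.ofReal Δ
          = ∫⁻ _ in Ioc a₀ a₁, c ^ p * ENNReal.ofReal (a₁ ^ (p-1)) := by
            rw [setLIntegral_const, Real.volume_Ioc, ha₀, ha₁]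
            have : (↑k + 1) * Δ - ↑k * Δ = Δ := by ring
            rw [this]
        _ ≤ _ := by
            apply setLIntegral_mono ((hf.pow_const p).mul
              (ENNReal.measurable_ofReal.comp (measurable_id.pow_const (p-1))))
            intro x hx
            have hx0 : 0 < x := lt_of_le_of_lt h01 hx.1
            apply mul_le_mul'
            · exact ENNReal.rpow_le_rpow
                (hanti (mem_Ioi.2 hx0) (mem_Ioi.2 h1pos) hx.2) hp0.le
            · exact ENNReal.ofReal_le_ofReal
                (Real.rpow_le_rpow_of_nonpos hx0 hx.2 (by linarith))
    -- concavity bound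
    have hconc : c ^ p * ENNReal.ofReal (a₂ ^ p) ≤ (c * ENNReal.ofReal a₁) ^ p +
        ENNReal.ofReal p * ∫⁻ t in Ioc a₀ a₁, f t ^ p * ENNReal.ofReal (t ^ (p-1)) := by
      have hC : a₂ ^ p ≤ a₁ ^ p + p * (a₁ ^ (p-1) * Δ) := by
        have := Creal p hp0 hp1 h1pos hΔ.le
        have he : a₁ + Δ = a₂ := by rw [ha₂]
        rwa [he] at this
      calc c ^ p * ENNReal.ofReal (a₂ ^ p)
          ≤ c ^ p * ENNReal.ofReal (a₁ ^ p + p * (a₁ ^ (p-1) * Δ)) :=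
            mul_le_mul' le_rfl (ENNReal.ofReal_le_ofReal hC)
        _ = c ^ p * ENNReal.ofReal (a₁ ^ p) +
              ENNReal.ofReal p * (c ^ p * ENNReal.ofReal (a₁ ^ (p-1)) * ENNReal.ofReal Δ) := by
            rw [ENNReal.ofReal_add (by positivity) (by positivity), mul_add]
            congr 1
            rw [ENNReal.ofReal_mul hp0.le, ENNReal.ofReal_mul (by positivity)]
            ring
        _ ≤ (c * ENNReal.ofReal a₁) ^ p +
              ENNReal.ofReal p * ∫⁻ t in Ioc a₀ a₁, f t ^ p * ENNReal.ofReal (t ^ (p-1)) := by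
            apply add_le_add
            · rw [ENNReal.mul_rpow_of_nonneg _ _ hp0.le,
                ENNReal.ofReal_rpow_of_pos h1pos]
            · exact mul_le_mul' le_rfl hGlow
    -- assemble
    have hfin : (c * ENNReal.ofReal a₁) ^ p ≠ ∞ := by
      apply (ENNReal.rpow_lt_top_of_nonneg hp0.le _).ne
      exact ENNReal.mul_ne_top hcfin ENNReal.ofReal_ne_top
    have main : (∫⁻ t in Ioc 0 a₂, f t) ^ p + (c * ENNReal.ofReal a₁) ^ p ≤
        (M ^ p * ENNReal.ofReal (Δ ^ p) +
          ENNReal.ofReal p * ∫⁻ t in Ioc 0 a₁, f t ^ p * ENNReal.ofReal (t ^ (p-1))) +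
          (c * ENNReal.ofReal a₁) ^ p := by
      calc (∫⁻ t in Ioc 0 a₂, f t) ^ p + (c * ENNReal.ofReal a₁) ^ p
          ≤ (F₁ + c * ENNReal.ofReal Δ) ^ p + (c * ENNReal.ofReal a₁) ^ p := by
            refine add_le_add ?_ le_rfl
            apply ENNReal.rpow_le_rpow _ hp0.le
            rw [hsplit]; exact add_le_add le_rfl hpiece
        _ ≤ F₁ ^ p + (c * ENNReal.ofReal a₂) ^ p := key
        _ ≤ F₁ ^ p + (c ^ p * ENNReal.ofReal (a₂ ^ p)) := by
            apply add_le_add le_rfl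
            rw [ENNReal.mul_rpow_of_nonneg _ _ hp0.le, ENNReal.ofReal_rpow_of_nonneg
              (by positivity) hp0.le]
        _ ≤ F₁ ^ p + ((c * ENNReal.ofReal a₁) ^ p +
              ENNReal.ofReal p * ∫⁻ t in Ioc a₀ a₁, f t ^ p * ENNReal.ofReal (t ^ (p-1))) :=
            add_le_add le_rfl hconc
        _ ≤ (M ^ p * ENNReal.ofReal (Δ ^ p) +
              ENNReal.ofReal p * ∫⁻ t in Ioc 0 a₀, f t ^ p * ENNReal.ofReal (t ^ (p-1))) +
              ((c * ENNReal.ofReal a₁) ^ p +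
              ENNReal.ofReal p * ∫⁻ t in Ioc a₀ a₁, f t ^ p * ENNReal.ofReal (t ^ (p-1))) :=
            add_le_add ih le_rfl
        _ = (M ^ p * ENNReal.ofReal (Δ ^ p) +
              ENNReal.ofReal p * ∫⁻ t in Ioc 0 a₁, f t ^ p * ENNReal.ofReal (t ^ (p-1))) +
              (c * ENNReal.ofReal a₁) ^ p := by
            have hunion : (∫⁻ t in Ioc 0 a₀, f t ^ p * ENNReal.ofReal (t ^ (p-1))) +
                (∫⁻ t in Ioc a₀ a₁, f t ^ p * ENNReal.ofReal (t ^ (p-1))) =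
                ∫⁻ t in Ioc 0 a₁, f t ^ p * ENNReal.ofReal (t ^ (p-1)) := by
              rw [← lintegral_union measurableSet_Ioc ((Set.Ioc_disjoint_Ioc_of_le le_rfl)),
                Ioc_union_Ioc_eq_Ioc h01 h02]
            rw [← hunion]; ring
    exact (ENNReal.add_le_add_iff_right hfin).mp main

end main

-- limit over partitions: bounded case over a finite interval
lemma B2 {p : ℝ} (hp0 : 0 < p) (hp1 : p ≤ 1) (f : ℝ → ℝ≥0∞) (hf : Measurable f)
    (hanti : AntitoneOn f (Ioi 0)) (M : ℝ≥0∞) (hM : M ≠ ∞) (hfM : ∀ t, 0 < t → f t ≤ M)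
    (T : ℝ) (hT : 0 < T) :
    (∫⁻ t in Ioc 0 T, f t) ^ p ≤
      ENNReal.ofReal p * ∫⁻ t in Ioi (0:ℝ), f t ^ p * ENNReal.ofReal (t ^ (p-1)) := by
  apply ENNReal.le_of_forall_pos_le_add
  intro ε hε _
  have hMp : M ^ p ≠ ∞ := (ENNReal.rpow_lt_top_of_nonneg hp0.le hM).ne
  set c : ℝ≥0∞ := (ε : ℝ≥0∞) / (M ^ p + 1) with hc
  have hc0 : c ≠ 0 := by
    apply ENNReal.div_ne_zero.2
    exact ⟨by exact_mod_cast hε.ne', ENNReal.add_ne_top.2 ⟨hMp, ENNReal.one_ne_top⟩⟩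
  have hcfin : c ≠ ∞ :=
    (ENNReal.div_lt_top ENNReal.coe_ne_top (by simp)).ne
  set r : ℝ := c.toReal with hr
  have hrpos : 0 < r := ENNReal.toReal_pos hc0 hcfin
  obtain ⟨N₀, hN₀⟩ := exists_nat_ge (T / r ^ (1/p))
  set Δ : ℝ := T / ((N₀ : ℝ) + 1) with hΔdef
  have hNpos : (0:ℝ) < (N₀ : ℝ) + 1 := by positivity
  have hΔ : 0 < Δ := by positivity
  have hTeq : ((N₀ : ℝ) + 1) * Δ = T := by rw [hΔdef]; field_simp
  have hbound := Bstep hp0 hp1 f hf hanti M hM hfM Δ hΔ N₀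
  rw [hTeq] at hbound
  have hΔr : Δ ^ p ≤ r := by
    have hr1p : 0 < r ^ (1/p) := Real.rpow_pos_of_pos hrpos _
    have hΔle : Δ ≤ r ^ (1/p) := by
      rw [hΔdef, div_le_iff₀ hNpos]
      calc T ≤ (N₀ : ℝ) * r ^ (1/p) := by
            rw [div_le_iff₀ hr1p] at hN₀; linarith
        _ ≤ r ^ (1/p) * ((N₀ : ℝ) + 1) := by nlinarith
    calc Δ ^ p ≤ (r ^ (1/p)) ^ p := Real.rpow_le_rpow hΔ.le hΔle hp0.le
      _ = r := by
        rw [← Real.rpow_mul hrpos.le, one_div, inv_mul_cancel₀ hp0.ne', Real.rpow_one]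
  have hsmall : M ^ p * ENNReal.ofReal (Δ ^ p) ≤ ε := by
    calc M ^ p * ENNReal.ofReal (Δ ^ p) ≤ M ^ p * ENNReal.ofReal r :=
          mul_le_mul' le_rfl (ENNReal.ofReal_le_ofReal hΔr)
      _ = M ^ p * c := by rw [hr, ENNReal.ofReal_toReal hcfin]
      _ ≤ (M ^ p + 1) * c := mul_le_mul' le_self_add le_rfl
      _ ≤ ε := by rw [hc]; exact ENNReal.mul_div_le
  calc (∫⁻ t in Ioc 0 T, f t) ^ p
      ≤ M ^ p * ENNReal.ofReal (Δ ^ p) +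
        ENNReal.ofReal p * ∫⁻ t in Ioc 0 ((N₀:ℝ) * Δ), f t ^ p * ENNReal.ofReal (t ^ (p-1)) :=
        hbound
    _ ≤ ε + ENNReal.ofReal p * ∫⁻ t in Ioi (0:ℝ), f t ^ p * ENNReal.ofReal (t ^ (p-1)) := by
        apply add_le_add hsmall
        apply mul_le_mul' le_rfl
        exact lintegral_mono_set (fun t ht => ht.1)
    _ = _ := add_comm _ _

-- full upper bound
lemma Bfull {p : ℝ} (hp0 : 0 < p) (hp1 : p ≤ 1) (f : ℝ → ℝ≥0∞) (hf : Measurable f)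
    (hanti : AntitoneOn f (Ioi 0)) :
    (∫⁻ t in Ioi (0:ℝ), f t) ^ p ≤
      ENNReal.ofReal p * ∫⁻ t in Ioi (0:ℝ), f t ^ p * ENNReal.ofReal (t ^ (p-1)) := by
  set R : ℝ≥0∞ := ENNReal.ofReal p * ∫⁻ t in Ioi (0:ℝ), f t ^ p * ENNReal.ofReal (t ^ (p-1))
    with hR
  set g : ℕ → ℝ → ℝ≥0∞ := fun n t => (Ioc (0:ℝ) n).indicator (fun s => min (f s) n) t with hg
  have hgmeas : ∀ n, Measurable (g n) :=
    fun n => ((hf.min measurable_const).indicator measurableSet_Ioc)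
  have hgmono : Monotone g := by
    intro n m hnm t
    rcases Classical.em (t ∈ Ioc (0:ℝ) n) with ht | ht
    · have ht' : t ∈ Ioc (0:ℝ) m := ⟨ht.1, ht.2.trans (by exact_mod_cast hnm)⟩
      rw [hg]; simp only [indicator_of_mem ht, indicator_of_mem ht']
      exact min_le_min le_rfl (by exact_mod_cast hnm)
    · rw [hg]; simp only [indicator_of_notMem ht]; exact zero_le
  have hsup : ∀ t, t ∈ Ioi (0:ℝ) → (⨆ n, g n t) = f t := by
    intro t ht
    apply le_antisymm
    · apply iSup_le
      intro n
      rcases Classical.em (t ∈ Ioc (0:ℝ) n) with h | h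
      · rw [hg]; simp only [indicator_of_mem h]; exact min_le_left _ _
      · rw [hg]; simp only [indicator_of_notMem h]; exact zero_le
    · have h1 : f t ≤ ⨆ n : ℕ, min (f t) (n : ℝ≥0∞) := by
        rcases eq_or_ne (f t) ∞ with hft | hft
        · rw [hft]
          have : ∀ n : ℕ, min (⊤ : ℝ≥0∞) n = n := fun n => min_eq_right le_top
          simp only [this]
          rw [ENNReal.iSup_natCast]
        · obtain ⟨n, hn⟩ := ENNReal.exists_nat_gt hft
          exact le_iSup_of_le n (le_min le_rfl hn.le)
      apply h1.trans
      apply iSup_le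
      intro n
      have hmem : t ∈ Ioc (0:ℝ) (n + Nat.ceil t : ℕ) := by
        refine ⟨ht, ?_⟩
        push_cast
        have := Nat.le_ceil t
        linarith
      apply le_iSup_of_le (n + Nat.ceil t)
      rw [hg]; simp only [indicator_of_mem hmem]
      apply min_le_min le_rfl
      exact_mod_cast Nat.le_add_right n _
  have hrw : (∫⁻ t in Ioi (0:ℝ), f t) = ⨆ n, ∫⁻ t in Ioi (0:ℝ), g n t := by
    rw [← lintegral_iSup (fun n => hgmeas n) hgmono]
    apply setLIntegral_congr_fun measurableSet_Ioi
    exact (fun t ht => (hsup t ht).symm)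
  have hbound : ∀ n : ℕ, (∫⁻ t in Ioi (0:ℝ), g n t) ^ p ≤ R := by
    intro n
    have hgle : ∀ t, 0 < t → g n t ≤ f t := by
      intro t ht
      rcases Classical.em (t ∈ Ioc (0:ℝ) (n:ℝ)) with h | h
      · rw [hg]; simp only [indicator_of_mem h]; exact min_le_left _ _
      · rw [hg]; simp only [indicator_of_notMem h]; exact zero_le
    have hGle : (∫⁻ t in Ioi (0:ℝ), g n t ^ p * ENNReal.ofReal (t ^ (p-1))) ≤
        ∫⁻ t in Ioi (0:ℝ), f t ^ p * ENNReal.ofReal (t ^ (p-1)) := by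
      apply setLIntegral_mono ((hf.pow_const p).mul
        (ENNReal.measurable_ofReal.comp (measurable_id.pow_const (p-1))))
      intro t ht
      exact mul_le_mul' (ENNReal.rpow_le_rpow (hgle t ht) hp0.le) le_rfl
    rcases Nat.eq_zero_or_pos n with rfl | hn
    · have : (∫⁻ t in Ioi (0:ℝ), g 0 t) = 0 := by
        rw [hg]
        simp
      rw [this, ENNReal.zero_rpow_of_pos hp0]
      exact zero_le
    · have hanti' : AntitoneOn (g n) (Ioi 0) := by
        intro x hx y hy hxy
        rcases Classical.em (y ∈ Ioc (0:ℝ) n) with h | h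
        · have hx' : x ∈ Ioc (0:ℝ) n := ⟨hx, hxy.trans h.2⟩
          rw [hg]; simp only [indicator_of_mem h, indicator_of_mem hx']
          exact min_le_min (hanti hx hy hxy) le_rfl
        · rw [hg]; simp only [indicator_of_notMem h]; exact zero_le
      have hgM : ∀ t, 0 < t → g n t ≤ (n : ℝ≥0∞) := by
        intro t ht
        rcases Classical.em (t ∈ Ioc (0:ℝ) (n:ℝ)) with h | h
        · rw [hg]; simp only [indicator_of_mem h]; exact min_le_right _ _
        · rw [hg]; simp only [indicator_of_notMem h]; exact zero_le
      have hnR : (0:ℝ) < n := by exact_mod_cast hn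
      have hint : (∫⁻ t in Ioi (0:ℝ), g n t) = ∫⁻ t in Ioc (0:ℝ) n, g n t := by
        have hdisj : Disjoint (Ioc (0:ℝ) n) (Ioi (n:ℝ)) := by
          rw [Set.disjoint_left]
          rintro x ⟨_, hx2⟩ hx3
          exact absurd (mem_Ioi.1 hx3) (not_lt.2 hx2)
        rw [← Ioc_union_Ioi_eq_Ioi hnR.le, lintegral_union measurableSet_Ioi hdisj]
        have hzero : ∀ t ∈ Ioi (n:ℝ), g n t = 0 := by
          intro t ht
          rw [hg]
          exact indicator_of_notMem (fun hmem => absurd (mem_Ioi.1 ht) (not_lt.2 hmem.2)) _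
        rw [setLIntegral_congr_fun measurableSet_Ioi hzero, lintegral_zero,
          add_zero]
      calc (∫⁻ t in Ioi (0:ℝ), g n t) ^ p = (∫⁻ t in Ioc (0:ℝ) n, g n t) ^ p := by rw [hint]
        _ ≤ ENNReal.ofReal p * ∫⁻ t in Ioi (0:ℝ), g n t ^ p * ENNReal.ofReal (t ^ (p-1)) :=
            B2 hp0 hp1 (g n) (hgmeas n) hanti' n (ENNReal.natCast_ne_top n) hgM n hnR
        _ ≤ R := by rw [hR]; exact mul_le_mul' le_rfl hGle
  rw [hrw]
  have hle : ∀ n, (∫⁻ t in Ioi (0:ℝ), g n t) ≤ R ^ (1/p) := by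
    intro n
    have := ENNReal.rpow_le_rpow (hbound n) (by positivity : (0:ℝ) ≤ 1/p)
    rwa [← ENNReal.rpow_mul, mul_one_div, div_self hp0.ne', ENNReal.rpow_one] at this
  calc (⨆ n, ∫⁻ t in Ioi (0:ℝ), g n t) ^ p ≤ (R ^ (1/p)) ^ p :=
        ENNReal.rpow_le_rpow (iSup_le hle) hp0.le
    _ = R := by rw [← ENNReal.rpow_mul, one_div, inv_mul_cancel₀ hp0.ne', ENNReal.rpow_one]

theorem stmt0 (p : ℝ) (hp0 : 0 < p) (hp1 : p ≤ 1) :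
    (⨆ f ∈ {f : ℝ → ℝ≥0∞ | Measurable f ∧ AntitoneOn f (Set.Ioi 0) ∧
        (∫⁻ t in Set.Ioi (0:ℝ), f t ^ p * ENNReal.ofReal (t ^ (p - 1))) ≠ 0 ∧
        (∫⁻ t in Set.Ioi (0:ℝ), f t ^ p * ENNReal.ofReal (t ^ (p - 1))) ≠ ⊤},
      (∫⁻ t in Set.Ioi (0:ℝ), f t) ^ p /
        (∫⁻ t in Set.Ioi (0:ℝ), f t ^ p * ENNReal.ofReal (t ^ (p - 1)))) =
    ENNReal.ofReal p := by
  apply le_antisymm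
  · apply iSup_le
    intro f
    apply iSup_le
    rintro ⟨hf, hanti, hD0, hDtop⟩
    rw [ENNReal.div_le_iff hD0 hDtop]
    exact Bfull hp0 hp1 f hf hanti
  · set f₀ : ℝ → ℝ≥0∞ := (Ioc (0:ℝ) 1).indicator (fun _ => 1) with hf₀
    have hf₀meas : Measurable f₀ := measurable_const.indicator measurableSet_Ioc
    have hf₀anti : AntitoneOn f₀ (Ioi 0) := by
      intro x hx y hy hxy
      rcases Classical.em (y ∈ Ioc (0:ℝ) 1) with h | h
      · have hx' : x ∈ Ioc (0:ℝ) 1 := ⟨hx, hxy.trans h.2⟩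
        rw [hf₀, indicator_of_mem h, indicator_of_mem hx']
      · rw [hf₀, indicator_of_notMem h]; exact zero_le
    -- numerator
    have hnum : (∫⁻ t in Ioi (0:ℝ), f₀ t) = 1 := by
      rw [hf₀, lintegral_indicator measurableSet_Ioc, Measure.restrict_restrict
        measurableSet_Ioc]
      have : Ioc (0:ℝ) 1 ∩ Ioi 0 = Ioc 0 1 := inter_eq_left.2 (fun t ht => ht.1)
      rw [this, setLIntegral_const, Real.volume_Ioc]
      norm_num
    -- denominator integrand simplification
    have hDrw : (∫⁻ t in Ioi (0:ℝ), f₀ t ^ p * ENNReal.ofReal (t ^ (p - 1))) =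
        ∫⁻ t in Ioc (0:ℝ) 1, ENNReal.ofReal (t ^ (p - 1)) := by
      have heq : ∀ t : ℝ, f₀ t ^ p * ENNReal.ofReal (t ^ (p - 1)) =
          (Ioc (0:ℝ) 1).indicator (fun s => ENNReal.ofReal (s ^ (p - 1))) t := by
        intro t
        rcases Classical.em (t ∈ Ioc (0:ℝ) 1) with h | h
        · rw [hf₀, indicator_of_mem h, indicator_of_mem h, ENNReal.one_rpow, one_mul]
        · rw [hf₀, indicator_of_notMem h, indicator_of_notMem h,
            ENNReal.zero_rpow_of_pos hp0, zero_mul]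
      simp_rw [heq]
      rw [lintegral_indicator measurableSet_Ioc, Measure.restrict_restrict measurableSet_Ioc]
      congr 1
      rw [inter_eq_left.2 (fun t ht => ht.1)]
    have hDval : (∫⁻ t in Ioc (0:ℝ) 1, ENNReal.ofReal (t ^ (p - 1))) =
        ENNReal.ofReal (1 / p) := by
      have hint : IntegrableOn (fun t : ℝ => t ^ (p - 1)) (Ioc 0 1) volume := by
        have := intervalIntegrable_rpow' (a := 0) (b := 1) (show (-1:ℝ) < p - 1 by linarith)
        rwa [intervalIntegrable_iff_integrableOn_Ioc_of_le (by norm_num)] at this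
      rw [← ofReal_integral_eq_lintegral_ofReal hint]
      · congr 1
        rw [← intervalIntegral.integral_of_le (by norm_num : (0:ℝ) ≤ 1),
          integral_rpow (Or.inl (by linarith : (-1:ℝ) < p - 1))]
        rw [sub_add_cancel, Real.one_rpow, Real.zero_rpow hp0.ne']
        norm_num
      · filter_upwards [ae_restrict_mem measurableSet_Ioc] with t ht
        exact Real.rpow_nonneg ht.1.le _
    have hD0 : ENNReal.ofReal (1 / p) ≠ 0 := by
      simp only [ne_eq, ENNReal.ofReal_eq_zero, not_le]
      positivity
    have hmem : f₀ ∈ {f : ℝ → ℝ≥0∞ | Measurable f ∧ AntitoneOn f (Set.Ioi 0) ∧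
        (∫⁻ t in Set.Ioi (0:ℝ), f t ^ p * ENNReal.ofReal (t ^ (p - 1))) ≠ 0 ∧
        (∫⁻ t in Set.Ioi (0:ℝ), f t ^ p * ENNReal.ofReal (t ^ (p - 1))) ≠ ⊤} := by
      refine ⟨hf₀meas, hf₀anti, ?_, ?_⟩
      · rw [hDrw, hDval]; exact hD0
      · rw [hDrw, hDval]; exact ENNReal.ofReal_ne_top
    have hval : (∫⁻ t in Set.Ioi (0:ℝ), f₀ t) ^ p /
        (∫⁻ t in Set.Ioi (0:ℝ), f₀ t ^ p * ENNReal.ofReal (t ^ (p - 1))) =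
        ENNReal.ofReal p := by
      rw [hnum, hDrw, hDval, ENNReal.one_rpow]
      rw [ENNReal.div_eq_inv_mul, mul_one, ← ENNReal.ofReal_inv_of_pos (by positivity),
        one_div, inv_inv]
    calc ENNReal.ofReal p = (∫⁻ t in Set.Ioi (0:ℝ), f₀ t) ^ p /
          (∫⁻ t in Set.Ioi (0:ℝ), f₀ t ^ p * ENNReal.ofReal (t ^ (p - 1))) := hval.symm
      _ ≤ _ := le_iSup₂ (f := fun (f : ℝ → ℝ≥0∞) (_ : f ∈ _) =>
          (∫⁻ t in Set.Ioi (0:ℝ), f t) ^ p /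
            (∫⁻ t in Set.Ioi (0:ℝ), f t ^ p * ENNReal.ofReal (t ^ (p - 1)))) f₀ hmem
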